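/- Let $A$ be an algebra over a commutative ring $k$, and let $x_1, \dots, x_m \in A$ be elements such that $x_l x_k = p_{lk} x_k x_l$ for all $k < l$, where $p_{lk} \in k$. Then for every natural number $N$, $(x_1 x_2 \cdots x_m)^N = \big(\prod_{k < l} p_{lk}^{N(N-1)/2}\big)\, x_1^N x_2^N \cdots x_m^N$. -/

import Mathlib

lemma lemA {k A : Type*} [CommRing k] [Ring A] [Algebra k A]
    (u v : A) (q : k) (h : v * u = q • (u * v)) :
    ∀ N : ℕ, v ^ N * u = q ^ N • (u * v ^ N) := by
  intro N
  induction N with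
  | zero => simp
  | succ n ih =>
    calc v ^ (n+1) * u = v ^ n * (v * u) := by rw [pow_succ, mul_assoc]
      _ = q • (v ^ n * u * v) := by rw [h, mul_smul_comm, mul_assoc]
      _ = q • ((q ^ n • (u * v ^ n)) * v) := by rw [ih]
      _ = q ^ (n+1) • (u * v ^ (n+1)) := by
          rw [smul_mul_assoc, smul_smul, mul_assoc, ← pow_succ, ← pow_succ']

lemma lemB {k A : Type*} [CommRing k] [Ring A] [Algebra k A]
    (u v : A) (q : k) (h : v * u = q • (u * v)) :
    ∀ N : ℕ, (u * v) ^ N = q ^ (N * (N - 1) / 2) • (u ^ N * v ^ N) := by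
  intro N
  induction N with
  | zero => simp
  | succ n ih =>
    have key : (n+1) * ((n+1) - 1) / 2 = n * (n-1)/2 + n := by
      rw [show (n+1) * ((n+1) - 1) / 2 = (n+1).choose 2 from (Nat.choose_two_right _).symm,
        show n * (n-1)/2 = n.choose 2 from (Nat.choose_two_right _).symm,
        Nat.choose_succ_succ]
      simp [Nat.add_comm]
    calc (u*v) ^ (n+1) = ((u*v)^n) * (u * v) := by rw [pow_succ]
      _ = (q ^ (n*(n-1)/2) • (u^n * v^n)) * (u*v) := by rw [ih]
      _ = q ^ (n*(n-1)/2) • (u^n * (v^n * u) * v) := by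
          rw [smul_mul_assoc]; congr 1; simp [mul_assoc]
      _ = q ^ (n*(n-1)/2) • (u^n * (q^n • (u * v^n)) * v) := by rw [lemA u v q h]
      _ = q ^ ((n+1) * ((n+1)-1)/2) • (u^(n+1) * v^(n+1)) := by
          rw [key, pow_add, mul_smul_comm, smul_mul_assoc, smul_smul, pow_succ, pow_succ]
          congr 1
          simp [mul_assoc]

lemma lemC {k A : Type*} [CommRing k] [Ring A] [Algebra k A]
    (x : ℕ → A) (v : A) (q : ℕ → k) :
    ∀ l : List ℕ, (∀ t ∈ l, v * x t = q t • (x t * v)) →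
      v * (l.map x).prod = (l.map q).prod • ((l.map x).prod * v) := by
  intro l
  induction l with
  | nil => simp
  | cons a l ih =>
    intro h
    simp only [List.map_cons, List.prod_cons]
    rw [← mul_assoc, h a (by simp), smul_mul_assoc, mul_assoc,
      ih (fun t ht => h t (by simp [ht])), mul_smul_comm, smul_smul, ← mul_assoc]

lemma lemD {k : Type*} [CommMonoid k] (f : ℕ → k) :
    ∀ (n s : ℕ), ((List.range' s n).map f).prod = ∏ a ∈ Finset.Ico s (s+n), f a := by
  intro n
  induction n with
  | zero => simp
  | succ n ih =>
    intro s
    rw [List.range'_concat, List.map_append, List.prod_append, ih,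
      show s + (n+1) = (s+n)+1 from rfl, Finset.prod_Ico_succ_top (by omega : s ≤ s + n)]
    simp


/-- Let `A` be an algebra over a commutative ring `k` and let
`x_1, …, x_m ∈ A` satisfy `x_l x_k = p_{lk} • (x_k x_l)` for all `k < l`, with
scalars `p_{lk} ∈ k`.  Then for every natural number `N`,
`(x_1 ⋯ x_m)^N = (∏_{k<l} p_{lk}^{N(N-1)/2}) • x_1^N ⋯ x_m^N`.
Here `List.range' 1 m = [1, …, m]`. -/
theorem stmt_5 {k A : Type*} [CommRing k] [Ring A] [Algebra k A] (m : ℕ)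
    (x : ℕ → A) (p : ℕ → ℕ → k)
    (hcomm : ∀ a b, 1 ≤ a → a < b → b ≤ m → x b * x a = p b a • (x a * x b)) (N : ℕ) :
    ((List.range' 1 m).map x).prod ^ N
      = (∏ b ∈ Finset.Icc 1 m, ∏ a ∈ Finset.Ico 1 b, p b a ^ (N * (N - 1) / 2)) •
          ((List.range' 1 m).map fun t => x t ^ N).prod := by
  revert hcomm
  induction m with
  | zero => intro _; simp
  | succ m ih =>
    intro hcomm
    have ih' := ih (fun a b ha hab hbm => hcomm a b ha hab (by omega))
    have hconcat : List.range' 1 (m+1) = List.range' 1 m ++ [m+1] := by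
      rw [List.range'_concat]
      simp [Nat.add_comm]
    set P := ((List.range' 1 m).map x).prod with hP
    set C := N * (N - 1) / 2 with hC
    -- commutation of x (m+1) with P
    have hq : x (m+1) * P = ((List.range' 1 m).map (p (m+1))).prod • (P * x (m+1)) := by
      apply lemC
      intro t ht
      rw [List.mem_range'_1] at ht
      exact hcomm t (m+1) ht.1 (by omega) (le_refl _)
    set Q := ((List.range' 1 m).map (p (m+1))).prod with hQ
    have hQ' : Q = ∏ a ∈ Finset.Ico 1 (m+1), p (m+1) a := by
      rw [hQ, lemD, Nat.add_comm 1 m]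
    have hLHS : ((List.range' 1 (m+1)).map x).prod = P * x (m+1) := by
      rw [hconcat]; simp [hP]
    have hRHS : ((List.range' 1 (m+1)).map fun t => x t ^ N).prod
        = ((List.range' 1 m).map fun t => x t ^ N).prod * x (m+1) ^ N := by
      rw [hconcat]; simp
    rw [hLHS, hRHS, lemB P (x (m+1)) Q hq N, ih',
      Finset.prod_Icc_succ_top (by omega : 1 ≤ m + 1),
      smul_mul_assoc, smul_smul, hQ', ← hC, ← Finset.prod_pow]
    congr 1
    ring
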